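/- Let f be continuously differentiable on [0,1] with ∫_0^1 f(x) dx = 0. Then ∫_0^1 f'(x)^2 dx ≥ π^2 ∫_0^1 f(x)^2 dx. -/

import Mathlib

open Real MeasureTheory intervalIntegral Set

private lemma cs_integral (a b : ℝ → ℝ) (ha : ContinuousOn a (Set.Icc (0:ℝ) 1))
    (hb : ContinuousOn b (Set.Icc (0:ℝ) 1)) :
    (∫ x in (0:ℝ)..1, a x * b x) ^ 2 ≤
      (∫ x in (0:ℝ)..1, a x ^ 2) * (∫ x in (0:ℝ)..1, b x ^ 2) := by
  have huIcc : uIcc (0:ℝ) 1 = Icc (0:ℝ) 1 := uIcc_of_le (by norm_num)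
  have iaa : IntervalIntegrable (fun x => a x ^ 2) volume 0 1 :=
    ((ha.pow 2).mono huIcc.le).intervalIntegrable
  have ibb : IntervalIntegrable (fun x => b x ^ 2) volume 0 1 :=
    ((hb.pow 2).mono huIcc.le).intervalIntegrable
  have iab : IntervalIntegrable (fun x => a x * b x) volume 0 1 :=
    ((ha.mul hb).mono huIcc.le).intervalIntegrable
  set A := ∫ x in (0:ℝ)..1, a x ^ 2 with hA
  set B := ∫ x in (0:ℝ)..1, a x * b x with hB
  set C := ∫ x in (0:ℝ)..1, b x ^ 2 with hC
  have key : ∀ t : ℝ, 0 ≤ A * (t * t) + (2 * B) * t + C := by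
    intro t
    have h1 : (0:ℝ) ≤ ∫ x in (0:ℝ)..1, (t * a x + b x) ^ 2 :=
      intervalIntegral.integral_nonneg (by norm_num) (fun x _ => sq_nonneg _)
    have h2 : ∫ x in (0:ℝ)..1, (t * a x + b x) ^ 2
        = A * (t * t) + (2 * B) * t + C := by
      have : ∀ x, (t * a x + b x) ^ 2
          = (t * t) * a x ^ 2 + ((2 * t) * (a x * b x) + b x ^ 2) := by
        intro x; ring
      rw [intervalIntegral.integral_congr (fun x _ => this x),
        intervalIntegral.integral_add (iaa.const_mul _) ((iab.const_mul _).add ibb),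
        intervalIntegral.integral_add (iab.const_mul _) ibb,
        intervalIntegral.integral_const_mul, intervalIntegral.integral_const_mul]
      ring
    rw [h2] at h1; exact h1
  have hd := discrim_le_zero key
  rw [discrim] at hd
  nlinarith [hd]


private lemma hasDerivAt_w {t : ℝ} (hs : Real.sin (π * t) ≠ 0) :
    HasDerivAt (fun s => -π * (Real.cos (π * s) / Real.sin (π * s)))
      (π ^ 2 / Real.sin (π * t) ^ 2) t := by
  have hid : HasDerivAt (fun s : ℝ => π * s) π t := by
    simpa using (hasDerivAt_id t).const_mul π
  have hcos : HasDerivAt (fun s => Real.cos (π * s)) (-Real.sin (π * t) * π) t :=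
    (Real.hasDerivAt_cos (π * t)).comp t hid
  have hsin : HasDerivAt (fun s => Real.sin (π * s)) (Real.cos (π * t) * π) t :=
    (Real.hasDerivAt_sin (π * t)).comp t hid
  have hdiv := (hcos.div hsin hs).const_mul (-π)
  refine hdiv.congr_deriv ?_
  have pyth := Real.sin_sq_add_cos_sq (π * t)
  field_simp
  ring_nf
  nlinarith [pyth]

set_option maxHeartbeats 1000000 in
private lemma wirtinger_dirichlet (u u' : ℝ → ℝ)
    (hd : ∀ x ∈ Set.Icc (0:ℝ) 1, HasDerivAt u (u' x) x)
    (hc : ContinuousOn u' (Set.Icc (0:ℝ) 1))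
    (h0 : u 0 = 0) (h1 : u 1 = 0) :
    π ^ 2 * ∫ x in (0:ℝ)..1, (u x) ^ 2 ≤ ∫ x in (0:ℝ)..1, (u' x) ^ 2 := by
  have hu : ContinuousOn u (Set.Icc (0:ℝ) 1) :=
    fun x hx => ((hd x hx).continuousAt).continuousWithinAt
  obtain ⟨M0, hM0⟩ := isCompact_Icc.exists_bound_of_continuousOn hc
  obtain ⟨K0, hK0⟩ := isCompact_Icc.exists_bound_of_continuousOn hu
  set M := max M0 0 with hMdef
  set K := max K0 0 with hKdef
  have hM : ∀ x ∈ Set.Icc (0:ℝ) 1, |u' x| ≤ M :=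
    fun x hx => le_trans (hM0 x hx) (le_max_left _ _)
  have hK : ∀ x ∈ Set.Icc (0:ℝ) 1, |u x| ≤ K :=
    fun x hx => le_trans (hK0 x hx) (le_max_left _ _)
  have hMnn : 0 ≤ M := le_max_right _ _
  have hKnn : 0 ≤ K := le_max_right _ _
  set C1 := M ^ 2 + π ^ 2 * K ^ 2 with hC1def
  have hC1nn : 0 ≤ C1 := by positivity
  have hhb : ∀ x ∈ Set.Icc (0:ℝ) 1, |u' x ^ 2 - π ^ 2 * u x ^ 2| ≤ C1 := by
    intro x hx
    have h1 := hM x hx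
    have h2 := hK x hx
    have e1 : u' x ^ 2 ≤ M ^ 2 := by nlinarith [abs_nonneg (u' x), sq_abs (u' x)]
    have e2 : u x ^ 2 ≤ K ^ 2 := by nlinarith [abs_nonneg (u x), sq_abs (u x)]
    rw [abs_le]
    have e3 : π ^ 2 * u x ^ 2 ≤ π ^ 2 * K ^ 2 :=
      mul_le_mul_of_nonneg_left e2 (sq_nonneg π)
    have e4 : 0 ≤ π ^ 2 * u x ^ 2 := mul_nonneg (sq_nonneg π) (sq_nonneg (u x))
    constructor
    · simp only [hC1def]; linarith [sq_nonneg (u' x)]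
    · simp only [hC1def]; linarith
  set C2 := 2 * C1 + 8 / 3 * M ^ 2 with hC2def
  have hC2nn : 0 ≤ C2 := by positivity
  set h : ℝ → ℝ := fun x => u' x ^ 2 - π ^ 2 * u x ^ 2 with hhdef
  have hhcont : ContinuousOn h (Set.Icc (0:ℝ) 1) :=
    (hc.pow 2).sub (continuousOn_const.mul (hu.pow 2))
  have key : ∀ a : ℝ, 0 < a → a ≤ 1 / 4 → -(C2 * a) ≤ ∫ x in (0:ℝ)..1, h x := by
    intro a ha ha4
    set b := 1 - a with hbdef
    have hab : a ≤ b := by simp [hbdef]; linarith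
    have ha0 : 0 < a := ha
    have hb1 : b ≤ 1 := by simp [hbdef]; linarith
    have hsub : Set.Icc a b ⊆ Set.Icc (0:ℝ) 1 :=
      Set.Icc_subset_Icc (by linarith) hb1
    have hsinpos : ∀ t ∈ Set.Icc a b, 0 < Real.sin (π * t) := by
      intro t ht
      apply Real.sin_pos_of_pos_of_lt_pi
      · have := ht.1; nlinarith [Real.pi_pos]
      · have := ht.2; nlinarith [Real.pi_pos]
    set w : ℝ → ℝ := fun t => -π * (Real.cos (π * t) / Real.sin (π * t)) with hwdef
    set P : ℝ → ℝ := fun t => w t * u t ^ 2 with hPdef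
    set P' : ℝ → ℝ :=
      fun t => π ^ 2 / Real.sin (π * t) ^ 2 * u t ^ 2 + w t * (2 * u t * u' t) with hP'def
    have hP : ∀ t ∈ Set.uIcc a b, HasDerivAt P (P' t) t := by
      intro t ht
      rw [Set.uIcc_of_le hab] at ht
      have h1 := hasDerivAt_w (ne_of_gt (hsinpos t ht))
      have h2 := (hd t (hsub ht)).pow 2
      have := h1.mul h2
      refine this.congr_deriv ?_
      simp [hP'def, hwdef]
    have hsincont : Continuous (fun t : ℝ => Real.sin (π * t)) :=
      Real.continuous_sin.comp (continuous_const.mul continuous_id)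
    have hcoscont : Continuous (fun t : ℝ => Real.cos (π * t)) :=
      Real.continuous_cos.comp (continuous_const.mul continuous_id)
    have hwcont : ContinuousOn w (Set.Icc a b) := by
      apply continuousOn_const.mul
      exact ContinuousOn.div hcoscont.continuousOn hsincont.continuousOn
        (fun t ht => ne_of_gt (hsinpos t ht))
    have hP'cont : ContinuousOn P' (Set.Icc a b) := by
      apply ContinuousOn.add
      · exact (ContinuousOn.div continuousOn_const (hsincont.continuousOn.pow 2)
          (fun t ht => pow_ne_zero 2 (ne_of_gt (hsinpos t ht)))).mul
          ((hu.mono hsub).pow 2)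
      · exact hwcont.mul ((continuousOn_const.mul (hu.mono hsub)).mul (hc.mono hsub))
    have iP' : IntervalIntegrable P' volume a b :=
      (hP'cont.mono (Set.uIcc_of_le hab).le).intervalIntegrable
    have hFTC : ∫ t in a..b, P' t = P b - P a :=
      intervalIntegral.integral_eq_sub_of_hasDerivAt hP iP'
    have pointwise : ∀ t ∈ Set.uIcc a b, h t + P' t = (u' t + w t * u t) ^ 2 := by
      intro t ht
      rw [Set.uIcc_of_le hab] at ht
      have hs := hsinpos t ht
      have pyth := Real.sin_sq_add_cos_sq (π * t)
      simp only [hhdef, hP'def, hwdef]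
      field_simp
      linear_combination (-π ^ 2 * u t ^ 2) * pyth
    have ih : IntervalIntegrable h volume a b :=
      ((hhcont.mono hsub).mono (Set.uIcc_of_le hab).le).intervalIntegrable
    have e1 : ∫ t in a..b, (h t + P' t) = ∫ t in a..b, (u' t + w t * u t) ^ 2 :=
      intervalIntegral.integral_congr pointwise
    have e2 : ∫ t in a..b, (h t + P' t) = (∫ t in a..b, h t) + ∫ t in a..b, P' t :=
      intervalIntegral.integral_add ih iP'
    have nonneg : 0 ≤ ∫ t in a..b, (u' t + w t * u t) ^ 2 :=
      intervalIntegral.integral_nonneg hab (fun x _ => sq_nonneg _)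
    have hmid : ∫ t in a..b, h t ≥ -(P b - P a) := by
      have : (∫ t in a..b, h t) + (P b - P a) = ∫ t in a..b, (u' t + w t * u t) ^ 2 := by
        rw [← e1, e2, hFTC]
      linarith
    -- boundary estimates
    have hsub2 : Set.uIcc (0:ℝ) a ⊆ Set.Icc (0:ℝ) 1 := by
      rw [Set.uIcc_of_le ha0.le]; exact Set.Icc_subset_Icc le_rfl (by linarith)
    have hsub3 : Set.uIcc b 1 ⊆ Set.Icc (0:ℝ) 1 := by
      rw [Set.uIcc_of_le hb1]; exact Set.Icc_subset_Icc (by simp [hbdef]; linarith) le_rfl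
    have hua : |u a| ≤ M * a := by
      have hFTC2 : ∫ t in (0:ℝ)..a, u' t = u a - u 0 :=
        intervalIntegral.integral_eq_sub_of_hasDerivAt (fun t ht => hd t (hsub2 ht))
          ((hc.mono hsub2).intervalIntegrable)
      have hb2 := intervalIntegral.norm_integral_le_of_norm_le_const
        (C := M) (f := u') (a := 0) (b := a)
        (fun x hx => hM x (hsub2 (Set.uIoc_subset_uIcc hx)))
      rw [hFTC2, h0, sub_zero] at hb2
      simpa [abs_of_pos ha0] using hb2
    have hub : |u b| ≤ M * a := by
      have hFTC3 : ∫ t in b..(1:ℝ), u' t = u 1 - u b :=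
        intervalIntegral.integral_eq_sub_of_hasDerivAt (fun t ht => hd t (hsub3 ht))
          ((hc.mono hsub3).intervalIntegrable)
      have hb3 := intervalIntegral.norm_integral_le_of_norm_le_const
        (C := M) (f := u') (a := b) (b := 1)
        (fun x hx => hM x (hsub3 (Set.uIoc_subset_uIcc hx)))
      rw [hFTC3, h1, zero_sub] at hb3
      have : |1 - b| = a := by rw [hbdef]; rw [abs_of_nonneg (by linarith)]; ring
      rw [norm_neg] at hb3
      rw [this] at hb3
      exact hb3
    have hπa1 : π * a ≤ 1 := by nlinarith [Real.pi_le_four]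
    have hsinlb : 3 / 4 * (π * a) ≤ Real.sin (π * a) := by
      have hx : 0 < π * a := mul_pos Real.pi_pos ha
      have hgt := Real.sin_gt_sub_cube hx
      have hsq : (π * a) ^ 2 ≤ 1 := by nlinarith
      have h2 : (π * a) ^ 3 ≤ π * a := by nlinarith
      linarith
    have hsa : Real.sin (π * a) = Real.sin (π * a) := rfl
    have hsb : Real.sin (π * b) = Real.sin (π * a) := by
      rw [show π * b = π - π * a by rw [hbdef]; ring, Real.sin_pi_sub]
    have hsina : 0 < Real.sin (π * a) := hsinpos a ⟨le_rfl, hab⟩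
    have hsinb : 0 < Real.sin (π * b) := hsinpos b ⟨hab, le_rfl⟩
    have hua2 : u a ^ 2 ≤ (M * a) ^ 2 := by nlinarith [hua, abs_nonneg (u a), sq_abs (u a)]
    have hub2 : u b ^ 2 ≤ (M * a) ^ 2 := by nlinarith [hub, abs_nonneg (u b), sq_abs (u b)]
    have hPabs : ∀ t, 0 < Real.sin (π * t) → u t ^ 2 ≤ (M * a) ^ 2 →
        |P t| * Real.sin (π * t) ≤ π * (M * a) ^ 2 := by
      intro t hst hut
      have e : P t * Real.sin (π * t) = -π * Real.cos (π * t) * u t ^ 2 := by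
        simp only [hPdef, hwdef]; field_simp
      have e2 : |P t| * Real.sin (π * t) = |P t * Real.sin (π * t)| := by
        rw [abs_mul (P t) (Real.sin (π * t)), abs_of_pos hst]
      rw [e2, e, abs_mul (-π * Real.cos (π * t)) (u t ^ 2),
        abs_mul (-π) (Real.cos (π * t)), abs_neg, abs_of_pos Real.pi_pos,
        abs_of_nonneg (sq_nonneg (u t))]
      calc π * |Real.cos (π * t)| * u t ^ 2
          ≤ π * 1 * u t ^ 2 := mul_le_mul_of_nonneg_right
            (mul_le_mul_of_nonneg_left (Real.abs_cos_le_one (π * t)) Real.pi_pos.le)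
            (sq_nonneg (u t))
        _ = π * u t ^ 2 := by ring
        _ ≤ π * (M * a) ^ 2 := mul_le_mul_of_nonneg_left hut Real.pi_pos.le
    have hPbound : ∀ t, |P t| * Real.sin (π * a) ≤ π * (M * a) ^ 2 →
        |P t| ≤ 4 / 3 * M ^ 2 * a := by
      intro t h2
      have h3 : |P t| * (3 / 4 * (π * a)) ≤ π * (M * a) ^ 2 :=
        le_trans (mul_le_mul_of_nonneg_left hsinlb (abs_nonneg (P t))) h2
      have h4 : 0 < 3 / 4 * (π * a) := by positivity
      have h5 : |P t| ≤ π * (M * a) ^ 2 / (3 / 4 * (π * a)) := (le_div_iff₀ h4).2 h3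
      have heq : π * (M * a) ^ 2 / (3 / 4 * (π * a)) = 4 / 3 * M ^ 2 * a := by
        field_simp
      rw [heq] at h5
      exact h5
    have hPa : |P a| ≤ 4 / 3 * M ^ 2 * a := by
      have h2 := hPabs a hsina hua2
      rw [hsa] at h2
      exact hPbound a h2
    have hPb : |P b| ≤ 4 / 3 * M ^ 2 * a := by
      have h2 := hPabs b hsinb hub2
      rw [hsb] at h2
      exact hPbound b h2
    -- splitting the integral
    have i1 : IntervalIntegrable h volume 0 a :=
      ((hhcont.mono hsub2)).intervalIntegrable
    have i3 : IntervalIntegrable h volume b 1 :=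
      ((hhcont.mono hsub3)).intervalIntegrable
    have e01 : (∫ x in (0:ℝ)..a, h x) + (∫ x in a..(1:ℝ), h x) = ∫ x in (0:ℝ)..1, h x :=
      intervalIntegral.integral_add_adjacent_intervals i1 (ih.trans i3)
    have ea1 : (∫ x in a..b, h x) + (∫ x in b..(1:ℝ), h x) = ∫ x in a..(1:ℝ), h x :=
      intervalIntegral.integral_add_adjacent_intervals ih i3
    have bound1 : |∫ x in (0:ℝ)..a, h x| ≤ C1 * a := by
      have hb2 := intervalIntegral.norm_integral_le_of_norm_le_const
        (C := C1) (f := h) (a := 0) (b := a)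
        (fun x hx => hhb x (hsub2 (Set.uIoc_subset_uIcc hx)))
      simpa [abs_of_pos ha0] using hb2
    have bound3 : |∫ x in b..(1:ℝ), h x| ≤ C1 * a := by
      have hb3 := intervalIntegral.norm_integral_le_of_norm_le_const
        (C := C1) (f := h) (a := b) (b := 1)
        (fun x hx => hhb x (hsub3 (Set.uIoc_subset_uIcc hx)))
      have : |1 - b| = a := by rw [hbdef, abs_of_nonneg (by linarith)]; ring
      rw [this] at hb3
      exact hb3
    have habs1 := abs_le.1 bound1
    have habs3 := abs_le.1 bound3
    have habsPa := abs_le.1 hPa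
    have habsPb := abs_le.1 hPb
    have hCsum : -(C2 * a) = -(C1 * a) + (-(4 / 3 * M ^ 2 * a) - 4 / 3 * M ^ 2 * a)
        + -(C1 * a) := by rw [hC2def]; ring
    clear_value C2 C1 M K h w P P' b
    linarith [hmid, habs1.1, habs3.1, habsPa.1, habsPa.2, habsPb.1, habsPb.2,
      e01, ea1, hCsum]
  -- conclude nonnegativity from key
  have hint : 0 ≤ ∫ x in (0:ℝ)..1, h x := by
    by_contra hneg
    push_neg at hneg
    set I := ∫ x in (0:ℝ)..1, h x with hIdef
    set ε := min (1 / 4) (-I / (C2 + 1)) with hεdef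
    have hC2p : (0:ℝ) < C2 + 1 := by linarith
    have hε : 0 < ε := lt_min (by norm_num) (div_pos (by linarith) hC2p)
    have hk := key ε hε (min_le_left _ _)
    have h5 : ε ≤ -I / (C2 + 1) := min_le_right _ _
    have h6 : C2 * ε ≤ C2 * (-I / (C2 + 1)) := mul_le_mul_of_nonneg_left h5 hC2nn
    have h7 : C2 * (-I / (C2 + 1)) < -I := by
      rw [mul_div_assoc', div_lt_iff₀ hC2p]
      nlinarith
    have h8 : C2 * ε < -I := lt_of_le_of_lt h6 h7
    linarith [hk, h8]
  have huIcc : Set.uIcc (0:ℝ) 1 = Set.Icc (0:ℝ) 1 := Set.uIcc_of_le (by norm_num)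
  have iu2 : IntervalIntegrable (fun x => u x ^ 2) volume 0 1 :=
    ((hu.pow 2).mono huIcc.le).intervalIntegrable
  have iu'2 : IntervalIntegrable (fun x => u' x ^ 2) volume 0 1 :=
    ((hc.pow 2).mono huIcc.le).intervalIntegrable
  have esub : ∫ x in (0:ℝ)..1, h x
      = (∫ x in (0:ℝ)..1, u' x ^ 2) - π ^ 2 * ∫ x in (0:ℝ)..1, u x ^ 2 := by
    simp only [hhdef]
    rw [intervalIntegral.integral_sub iu'2 (iu2.const_mul _),
      intervalIntegral.integral_const_mul]
  rw [esub] at hint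
  linarith


theorem wirtinger_unit_interval (f f' : ℝ → ℝ)
    (hderiv : ∀ x ∈ Set.Icc (0:ℝ) 1, HasDerivAt f (f' x) x)
    (hcont : ContinuousOn f' (Set.Icc (0:ℝ) 1))
    (hmean : ∫ x in (0:ℝ)..1, f x = 0) :
    ∫ x in (0:ℝ)..1, (f' x) ^ 2 ≥ π ^ 2 * ∫ x in (0:ℝ)..1, (f x) ^ 2 := by
  have fc : ContinuousOn f (Set.Icc (0:ℝ) 1) :=
    fun x hx => (hderiv x hx).continuousAt.continuousWithinAt
  have huIcc : Set.uIcc (0:ℝ) 1 = Set.Icc (0:ℝ) 1 := Set.uIcc_of_le (by norm_num)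
  set g : ℝ → ℝ := fun x => f (min 1 (max 0 x)) with hgdef
  have hmem : ∀ x : ℝ, min 1 (max 0 x) ∈ Set.Icc (0:ℝ) 1 := by
    intro x
    exact ⟨le_min zero_le_one (le_max_left 0 x), min_le_left _ _⟩
  have hgc : Continuous g :=
    fc.comp_continuous (continuous_const.min (continuous_const.max continuous_id)) hmem
  have hgeq : Set.EqOn g f (Set.Icc (0:ℝ) 1) := by
    intro x hx
    simp only [hgdef]
    rw [max_eq_right hx.1, min_eq_right hx.2]
  set F : ℝ → ℝ := fun x => ∫ t in (0:ℝ)..x, g t with hFdef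
  have hFd : ∀ x : ℝ, HasDerivAt F (g x) x := by
    intro x
    exact intervalIntegral.integral_hasDerivAt_right
      (hgc.intervalIntegrable 0 x) (hgc.stronglyMeasurable.stronglyMeasurableAtFilter)
      hgc.continuousAt
  have hF0 : F 0 = 0 := intervalIntegral.integral_same
  have hF1 : F 1 = 0 := by
    have e : ∫ t in (0:ℝ)..1, g t = ∫ t in (0:ℝ)..1, f t :=
      intervalIntegral.integral_congr (huIcc ▸ hgeq)
    simp only [hFdef]
    rw [e, hmean]
  have hFd' : ∀ x ∈ Set.Icc (0:ℝ) 1, HasDerivAt F (f x) x := by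
    intro x hx
    have := hFd x
    rwa [hgeq hx] at this
  have hFc : ContinuousOn F (Set.Icc (0:ℝ) 1) :=
    fun x hx => (hFd x).continuousAt.continuousWithinAt
  have hdir : π ^ 2 * ∫ x in (0:ℝ)..1, (F x) ^ 2 ≤ ∫ x in (0:ℝ)..1, (f x) ^ 2 :=
    wirtinger_dirichlet F f hFd' fc hF0 hF1
  have if' : IntervalIntegrable f' volume 0 1 := (hcont.mono huIcc.le).intervalIntegrable
  have iff2 : IntervalIntegrable f volume 0 1 := (fc.mono huIcc.le).intervalIntegrable
  have hparts : ∫ x in (0:ℝ)..1, F x * f' x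
      = F 1 * f 1 - F 0 * f 0 - ∫ x in (0:ℝ)..1, f x * f x :=
    intervalIntegral.integral_mul_deriv_eq_deriv_mul
      (fun x hx => hFd' x (huIcc ▸ hx)) (fun x hx => hderiv x (huIcc ▸ hx)) iff2 if'
  have hsq : ∫ x in (0:ℝ)..1, f x * f x = ∫ x in (0:ℝ)..1, f x ^ 2 :=
    intervalIntegral.integral_congr (fun x _ => (sq (f x)).symm)
  have hFf' : ∫ x in (0:ℝ)..1, F x * f' x = -(∫ x in (0:ℝ)..1, f x ^ 2) := by
    rw [hparts, hF0, hF1, hsq]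
    ring
  have hcs := cs_integral F f' hFc hcont
  rw [hFf'] at hcs
  have hA : 0 ≤ ∫ x in (0:ℝ)..1, f x ^ 2 :=
    intervalIntegral.integral_nonneg (by norm_num) (fun x _ => sq_nonneg _)
  have hB : 0 ≤ ∫ x in (0:ℝ)..1, F x ^ 2 :=
    intervalIntegral.integral_nonneg (by norm_num) (fun x _ => sq_nonneg _)
  have hC : 0 ≤ ∫ x in (0:ℝ)..1, f' x ^ 2 :=
    intervalIntegral.integral_nonneg (by norm_num) (fun x _ => sq_nonneg _)
  set A := ∫ x in (0:ℝ)..1, f x ^ 2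
  set B := ∫ x in (0:ℝ)..1, F x ^ 2
  set C := ∫ x in (0:ℝ)..1, f' x ^ 2
  clear_value A B C
  rw [ge_iff_le]
  -- hcs : (-A)^2 ≤ B * C, hdir : π^2 * B ≤ A
  rcases eq_or_lt_of_le hA with hA0 | hA0
  · calc π ^ 2 * A = 0 := by rw [← hA0]; ring
      _ ≤ C := hC
  · nlinarith [mul_le_mul_of_nonneg_right hdir hC, mul_le_mul_of_nonneg_left hcs (sq_nonneg π),
      mul_pos (mul_pos Real.pi_pos Real.pi_pos) hA0]
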